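/- (Invariant of the discarding procedure / online contention resolution.) Let n ∈ ℕ and x_1, …, x_n ∈ [0,1] with Σ_{k=1}^n x_k ≤ 1. Set θ_0 := 0 and θ_k := Σ_{i=1}^k x_i, and define p_0 := 1 and p_k := p_{k−1}·(1 − x_k/(2 − θ_{k−1})) for 1 ≤ k ≤ n. Then p_k = 1 − θ_k/2 for all 0 ≤ k ≤ n, and consequently p_{k−1}·x_k/(2 − θ_{k−1}) = x_k/2 for all 1 ≤ k ≤ n. -/

import Mathlib

open scoped BigOperators

/-- **Invariant of the discarding procedure (online contention resolution).**
Let `x_1, …, x_n ∈ [0,1]` with `Σ x_k ≤ 1`, `θ_k := Σ_{i=1}^k x_i`, `p_0 := 1` and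
`p_k := p_{k−1}·(1 − x_k/(2 − θ_{k−1}))`.  Then `p_k = 1 − θ_k/2` for all `k ≤ n`, and
consequently `p_{k−1}·x_k/(2 − θ_{k−1}) = x_k/2` for all `1 ≤ k ≤ n`. -/
theorem discarding_invariant
    (n : ℕ) (x : ℕ → ℝ)
    (hx : ∀ k, 1 ≤ k → k ≤ n → x k ∈ Set.Icc (0 : ℝ) 1)
    (hsum : ∑ k ∈ Finset.Icc 1 n, x k ≤ 1)
    (θ : ℕ → ℝ) (hθ : ∀ k, θ k = ∑ i ∈ Finset.Icc 1 k, x i)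
    (p : ℕ → ℝ) (hp0 : p 0 = 1)
    (hp : ∀ k, 1 ≤ k → k ≤ n → p k = p (k - 1) * (1 - x k / (2 - θ (k - 1)))) :
    (∀ k ≤ n, p k = 1 - θ k / 2) ∧
      ∀ k, 1 ≤ k → k ≤ n → p (k - 1) * (x k / (2 - θ (k - 1))) = x k / 2 := by
  have hθle : ∀ k ≤ n, θ k ≤ 1 := by
    intro k hk
    rw [hθ]
    refine le_trans ?_ hsum
    apply Finset.sum_le_sum_of_subset_of_nonneg
    · exact Finset.Icc_subset_Icc_right hk
    · intro i hi _
      exact (hx i (Finset.mem_Icc.mp hi).1 (Finset.mem_Icc.mp hi).2).1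
  have hne : ∀ k ≤ n, (2 : ℝ) - θ k ≠ 0 := by
    intro k hk
    have := hθle k hk
    linarith
  have main : ∀ k ≤ n, p k = 1 - θ k / 2 := by
    intro k
    induction k with
    | zero =>
      intro _
      simp [hp0, hθ 0]
    | succ m ih =>
      intro hm
      have hm' : m ≤ n := Nat.le_of_succ_le hm
      have ihm := ih hm'
      have hrec := hp (m + 1) (Nat.le_add_left 1 m) hm
      simp only [Nat.add_sub_cancel] at hrec
      have hsucc : θ (m + 1) = θ m + x (m + 1) := by
        rw [hθ, hθ, Finset.sum_Icc_succ_top (Nat.le_add_left 1 m)]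
      have h2 := hne m hm'
      rw [hrec, ihm, hsucc]
      field_simp
      ring
  refine ⟨main, fun k hk1 hkn => ?_⟩
  obtain ⟨m, rfl⟩ := Nat.exists_eq_add_of_le hk1
  simp only [Nat.add_sub_cancel_left] at *
  have hm' : m ≤ n := le_trans (Nat.le_add_left m 1) hkn
  rw [main m hm']
  have h2 := hne m hm'
  have := hθle m hm'
  field_simp
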